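/- Let $A$ be a DVR with fraction field $F$ and uniformizer $\pi$, and let $\mathcal{R}, \mathcal{R}'$ be two finite free $A$-submodules of a fixed $F$-vector space with $\mathcal{R} \otimes_A F = \mathcal{R}' \otimes_A F$. Define filtrations $\mathcal{G}^\lambda \mathcal{R} := \mathcal{R} \cap \pi^{\lceil \lambda \rceil} \mathcal{R}'$ and $\mathcal{G}'^\lambda \mathcal{R}' := \mathcal{R}' \cap \pi^{\lceil \lambda \rceil} \mathcal{R}$, and let $G, G'$ be the induced filtrations on $R := \mathcal{R}/\pi\mathcal{R}$ and $R' := \mathcal{R}'/\pi\mathcal{R}'$. Then for every integer $\lambda$, multiplication by $\pi^{-\lambda}$ induces an isomorphism of graded pieces $\mathrm{gr}_G^\lambda R \cong \mathrm{gr}_{G'}^{-\lambda} R'$. -/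

import Mathlib

/-!
STATEMENT 8 (Lemma 3.10, key linear algebra): let `A` be a DVR with fraction field `K`,
uniformizer `π`, and `ℛ, ℛ'` finite free `A`-submodules of a `K`-vector space `V` with
the same `K`-span. With `𝒢^l ℛ := ℛ ∩ π^l ℛ'` and `𝒢'^l ℛ' := ℛ' ∩ π^l ℛ`, multiplication
by `π^{-l}` induces, for every integer `l`, an isomorphism
`gr_G^l R ≅ gr_{G'}^{-l} R'`, where `gr_G^l R = 𝒢^l ℛ / (𝒢^{l+1} ℛ + (𝒢^l ℛ ∩ πℛ))` is
the graded piece of the filtration induced on `R = ℛ/πℛ` (and similarly for `G'`).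
-/

theorem stmt8 {A K V : Type*} [CommRing A] [IsDomain A] [IsDiscreteValuationRing A]
    [Field K] [Algebra A K] [IsFractionRing A K]
    [AddCommGroup V] [Module K V] [Module A V] [IsScalarTower A K V]
    (π : A) (hπ : Irreducible π)
    (R R' : Submodule A V)
    [Module.Free A R] [Module.Finite A R] [Module.Free A R'] [Module.Finite A R']
    (hspan : Submodule.span K (R : Set V) = Submodule.span K (R' : Set V))
    (l : ℤ) :
    letI u : K := algebraMap A K π
    -- multiplication by `π^j` on `V`, as an `A`-linear map
    letI mulπ : ℤ → (V →ₗ[A] V) := fun j =>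
      ((u ^ j) • (LinearMap.id : V →ₗ[K] V)).restrictScalars A
    letI sG : ℤ → Submodule A V := fun j => R ⊓ (R'.map (mulπ j))
    letI sG' : ℤ → Submodule A V := fun j => R' ⊓ (R.map (mulπ j))
    letI πR : Submodule A V := R ⊓ (R.map (mulπ 1))
    letI πR' : Submodule A V := R' ⊓ (R'.map (mulπ 1))
    Nonempty (
      ((sG l) ⧸ ((sG (l + 1) ⊔ (sG l ⊓ πR)).comap (sG l).subtype))
        ≃ₗ[A]
      ((sG' (-l)) ⧸ ((sG' (-l + 1) ⊔ (sG' (-l) ⊓ πR')).comap (sG' (-l)).subtype))) := by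

  set u : K := algebraMap A K π with hu_def
  set mulπ : ℤ → (V →ₗ[A] V) := fun j =>
    ((u ^ j) • (LinearMap.id : V →ₗ[K] V)).restrictScalars A with hmulπ_def
  set sG : ℤ → Submodule A V := fun j => R ⊓ (R'.map (mulπ j)) with hsG_def
  set sG' : ℤ → Submodule A V := fun j => R' ⊓ (R.map (mulπ j)) with hsG'_def
  set πR : Submodule A V := R ⊓ (R.map (mulπ 1)) with hπR_def
  set πR' : Submodule A V := R' ⊓ (R'.map (mulπ 1)) with hπR'_def
  have hu : u ≠ 0 := by
    simpa [u] using fun h => hπ.ne_zero ((map_eq_zero_iff _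
      (IsFractionRing.injective A K)).mp h)
  have hmulπ : ∀ (j : ℤ) (x : V), mulπ j x = u ^ j • x := fun j x => rfl
  have hsm : ∀ (a b : ℤ) (x : V), u ^ a • u ^ b • x = u ^ (a + b) • x := fun a b x => by
    rw [smul_smul, ← zpow_add₀ hu]
  have hcan : ∀ (a b : ℤ) (x : V), a + b = 0 → u ^ a • u ^ b • x = x := fun a b x h => by
    rw [hsm, h, zpow_zero, one_smul]
  have hπmem : ∀ (S : Submodule A V) (x : V), x ∈ S → u • x ∈ S := fun S x hx => by
    have : u • x = π • x := by
      simp [u, algebraMap_smul]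
    rw [this]; exact S.smul_mem π hx
  have hmem : ∀ (S : Submodule A V) (j : ℤ) (x : V),
      x ∈ S.map (mulπ j) ↔ u ^ (-j) • x ∈ S := by
    intro S j x
    constructor
    · rintro ⟨y, hy, rfl⟩
      rw [hmulπ, hcan _ _ _ (by ring)]
      exact hy
    · intro h
      exact ⟨u ^ (-j) • x, h, by rw [hmulπ, hcan _ _ _ (by ring)]⟩
  have hG : ∀ (j : ℤ) (x : V), x ∈ sG j ↔ x ∈ R ∧ u ^ (-j) • x ∈ R' := by
    intro j x; rw [show sG j = R ⊓ (R'.map (mulπ j)) from rfl, Submodule.mem_inf, hmem]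
  have hG' : ∀ (j : ℤ) (x : V), x ∈ sG' j ↔ x ∈ R' ∧ u ^ (-j) • x ∈ R := by
    intro j x; rw [show sG' j = R' ⊓ (R.map (mulπ j)) from rfl, Submodule.mem_inf, hmem]
  have hπR : ∀ x : V, x ∈ πR ↔ x ∈ R ∧ u ^ (-1 : ℤ) • x ∈ R := by
    intro x; rw [show πR = R ⊓ (R.map (mulπ 1)) from rfl, Submodule.mem_inf, hmem]
  have hπR' : ∀ x : V, x ∈ πR' ↔ x ∈ R' ∧ u ^ (-1 : ℤ) • x ∈ R' := by
    intro x; rw [show πR' = R' ⊓ (R'.map (mulπ 1)) from rfl, Submodule.mem_inf, hmem]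
  have hul : u ^ (-l) ≠ 0 := zpow_ne_zero _ hu
  set e : V ≃ₗ[A] V := (LinearEquiv.smulOfNeZero K V _ hul).restrictScalars A with he_def
  have he : ∀ x : V, e x = u ^ (-l) • x := fun x => rfl
  have hesymm : ∀ x : V, e.symm x = u ^ l • x := by
    intro x
    apply e.injective
    rw [e.apply_symm_apply, he, hcan _ _ _ (by ring)]
  have hmape : ∀ (S : Submodule A V) (x : V),
      x ∈ S.map (e : V →ₗ[A] V) ↔ u ^ l • x ∈ S := by
    intro S x
    rw [Submodule.mem_map_equiv, hesymm]
  -- helper: u•(something in S) stays in S, expressed with zpow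
  have huu : ∀ x : V, u • u ^ (-1 : ℤ) • x = x := fun x => by
    rw [smul_smul, ← zpow_one_add₀ hu]
    norm_num
  have hstep : ∀ (S : Submodule A V) (a : ℤ) (x : V),
      u ^ a • x ∈ S → u ^ (a + 1) • x ∈ S := by
    intro S a x hx
    have h := hπmem S _ hx
    rwa [smul_smul, ← zpow_one_add₀ hu, add_comm] at h
  have h1 : (sG l).map (e : V →ₗ[A] V) = sG' (-l) := by
    ext x
    rw [hmape, hG, hG', hcan _ _ _ (by ring)]
    constructor
    · rintro ⟨h1, h2⟩; exact ⟨h2, by rwa [neg_neg]⟩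
    · rintro ⟨h1, h2⟩; exact ⟨by rwa [neg_neg] at h2, h1⟩
  have h2a : (sG (l + 1)).map (e : V →ₗ[A] V) = sG' (-l) ⊓ πR' := by
    ext x
    rw [hmape, hG, Submodule.mem_inf, hG', hπR', hsm, show -(l+1) + l = -1 by ring,
      neg_neg]
    constructor
    · rintro ⟨h1, h2⟩
      have hx : x ∈ R' := by
        have h3 := hπmem R' _ h2
        rwa [huu] at h3
      exact ⟨⟨hx, h1⟩, hx, h2⟩
    · rintro ⟨⟨_, h1⟩, _, h2⟩; exact ⟨h1, h2⟩
  have h2b : (sG l ⊓ πR).map (e : V →ₗ[A] V) = sG' (-l + 1) := by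
    ext x
    rw [hmape, Submodule.mem_inf, hG, hπR, hG', hcan _ _ _ (by ring), hsm,
      show -1 + l = l - 1 by ring, show -(-l + 1) = l - 1 by ring]
    constructor
    · rintro ⟨⟨_, h1⟩, _, h2⟩; exact ⟨h1, h2⟩
    · rintro ⟨h1, h2⟩
      have hx : u ^ l • x ∈ R := by
        have := hstep R _ _ h2
        rwa [show l - 1 + 1 = l by ring] at this
      exact ⟨⟨hx, h1⟩, hx, h2⟩
  have h2 : ((sG (l + 1)) ⊔ (sG l ⊓ πR)).map (e : V →ₗ[A] V)
      = (sG' (-l + 1)) ⊔ (sG' (-l) ⊓ πR') := by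
    rw [Submodule.map_sup, h2a, h2b, sup_comm]
  -- the induced equivalence on the filtration pieces
  set e₁ : (sG l) ≃ₗ[A] (sG' (-l)) :=
    (e.submoduleMap (sG l)).trans (LinearEquiv.ofEq _ _ h1) with he₁_def
  have he₁symm : ∀ y : (sG' (-l)), ((e₁.symm y : sG l) : V) = u ^ l • (y : V) := by
    intro y
    rw [← hesymm]
    simp [he₁_def]
  have he₁app : ∀ z : (sG l), ((e₁ z : sG' (-l)) : V) = e (z : V) := by
    intro z; simp [he₁_def]
  refine ⟨Submodule.Quotient.equiv _ _ e₁ ?_⟩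
  ext y
  simp only [Submodule.mem_map, Submodule.mem_comap, Submodule.subtype_apply]
  constructor
  · rintro ⟨z, hz, rfl⟩
    rw [LinearEquiv.coe_coe, he₁app, ← h2]
    exact Submodule.mem_map_of_mem hz
  · intro hy
    refine ⟨e₁.symm y, ?_, e₁.apply_symm_apply y⟩
    rw [he₁symm]
    rw [← h2, hmape] at hy
    exact hy
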